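/- Let D be a bipartite tournament which contains a directed cycle and has sink elimination index \zeta(D) >= 2. Then cindex(D) = \zeta(D) and cperiod(D) = 1. -/

import Mathlib

/-- `walkN D n u v` : there is a directed walk of length `n` from `u` to `v` in the digraph `D`. -/
def walkN {V : Type*} (D : V → V → Prop) : ℕ → V → V → Prop
  | 0 => fun u v => u = v
  | n+1 => fun u v => ∃ w, D u w ∧ walkN D n w v

/-- The `m`-step competition graph of the digraph `D`. -/
def cmGraph {V : Type*} (D : V → V → Prop) (m : ℕ) : SimpleGraph V where
  Adj u v := u ≠ v ∧ ∃ z, walkN D m u z ∧ walkN D m v z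
  symm := by
    refine ⟨?_⟩
    intro u v h
    exact ⟨Ne.symm h.1, h.2.imp fun z hz => ⟨hz.2, hz.1⟩⟩
  loopless := by refine ⟨?_⟩; intro v h; exact h.1 rfl

/-- Sinks of the subdigraph of `D` induced by `S`. -/
def sinks {V : Type*} (D : V → V → Prop) (S : Set V) : Set V :=
  {v ∈ S | ∀ w ∈ S, ¬ D v w}

/-- The digraph sequence `D_0, D_1, …` (as vertex sets) associated with the sink sequence. -/
def Dseq {V : Type*} (D : V → V → Prop) : ℕ → Set V
  | 0 => Set.univ
  | n+1 => Dseq D n \ sinks D (Dseq D n)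

/-- The sink sequence `W_0, W_1, …` of `D`. -/
def Wseq {V : Type*} (D : V → V → Prop) (n : ℕ) : Set V := sinks D (Dseq D n)

/-- `k` is the sink elimination index `ζ(D)`. -/
def IsSinkElimIndex {V : Type*} (D : V → V → Prop) (k : ℕ) : Prop :=
  (Wseq D k = Dseq D k ∨ Wseq D k = ∅) ∧
  ∀ j < k, Wseq D j ≠ Dseq D j ∧ Wseq D j ≠ ∅

/-- A digraph is acyclic iff it has no directed closed walk of positive length. -/
def DigraphAcyclic {V : Type*} (D : V → V → Prop) : Prop :=
  ∀ v : V, ∀ n : ℕ, 0 < n → ¬ walkN D n v v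

/-- `D` is a bipartite tournament with bipartition `(V1, V2)`. -/
structure IsBipartiteTournament {V : Type*} (D : V → V → Prop) (V1 V2 : Set V) : Prop where
  nonempty1 : V1.Nonempty
  nonempty2 : V2.Nonempty
  union_eq : V1 ∪ V2 = Set.univ
  disj : V1 ∩ V2 = ∅
  oriented : ∀ x ∈ V1, ∀ y ∈ V2, Xor' (D x y) (D y x)
  no_intra : ∀ x y, D x y → (x ∈ V1 ∧ y ∈ V2) ∨ (x ∈ V2 ∧ y ∈ V1)

/-- The competition graph sequence of `D` is eventually equal, starting from `q`. -/
def PeriodicFrom {V : Type*} (D : V → V → Prop) (q : ℕ) : Prop :=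
  ∃ r, 0 < r ∧ ∀ i : ℕ, cmGraph D (q + i) = cmGraph D (q + r + i)

/-- `q` is the competition index of `D`. -/
def IsCindex {V : Type*} (D : V → V → Prop) (q : ℕ) : Prop :=
  0 < q ∧ PeriodicFrom D q ∧ ∀ q', 0 < q' → PeriodicFrom D q' → q ≤ q'

/-- `p` is the competition period of `D`, given that `q` is its competition index. -/
def IsCperiod {V : Type*} (D : V → V → Prop) (q p : ℕ) : Prop :=
  0 < p ∧ cmGraph D q = cmGraph D (q + p) ∧
    ∀ p', 0 < p' → cmGraph D q = cmGraph D (q + p') → p ≤ p'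

section
variable {V : Type*} {D : V → V → Prop}

lemma iff_of_not_iff_not {p q : Prop} (h : ¬(p ↔ ¬q)) : p ↔ q := by tauto

lemma not_iff_of_iff_not {p q : Prop} (h : p ↔ ¬q) : ¬p ↔ q := by tauto

lemma not_iff_of_not_iff {p q : Prop} (h : ¬(p ↔ q)) : ¬p ↔ q := by tauto

lemma iff_of_iff_congr {p q r : Prop} (h : (p ↔ r) ↔ (q ↔ r)) : p ↔ q := by tauto

lemma walkN_append {a b : ℕ} {u x z : V} (h1 : walkN D a u x) (h2 : walkN D b x z) :
    walkN D (a + b) u z := by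
  induction a generalizing u with
  | zero =>
    have : u = x := h1
    rw [Nat.zero_add, this]; exact h2
  | succ a ih =>
    obtain ⟨w, hw, h1'⟩ := h1
    rw [Nat.succ_add]
    exact ⟨w, hw, ih h1'⟩

lemma walkN_snoc {n : ℕ} {u x y : V} (h1 : walkN D n u x) (h2 : D x y) :
    walkN D (n + 1) u y :=
  walkN_append h1 (⟨y, h2, rfl⟩ : walkN D 1 x y)

lemma walkN_prefix {a b : ℕ} {u z : V} (h : walkN D (a + b) u z) :
    ∃ x, walkN D a u x := by
  induction a generalizing u with
  | zero => exact ⟨u, rfl⟩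
  | succ a ih =>
    rw [Nat.succ_add] at h
    obtain ⟨w, hw, h'⟩ := h
    obtain ⟨x, hx⟩ := ih h'
    exact ⟨x, w, hw, hx⟩

lemma exists_walkN_of_closed {n : ℕ} {v : V} (hv : walkN D n v v) (hn : 0 < n) :
    ∀ m, ∃ z, walkN D m v z := by
  intro m
  induction m using Nat.strong_induction_on with
  | _ m ih =>
    rcases le_or_gt m n with h | h
    · obtain ⟨b, hb⟩ : ∃ b, n = m + b := ⟨n - m, by omega⟩
      rw [hb] at hv
      exact walkN_prefix hv
    · obtain ⟨z, hz⟩ := ih (m - n) (by omega)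
      refine ⟨z, ?_⟩
      have := walkN_append hv hz
      rwa [show n + (m - n) = m by omega] at this

lemma mem_Dseq_succ {u : V} {j : ℕ} :
    u ∈ Dseq D (j+1) ↔ u ∈ Dseq D j ∧ u ∉ Wseq D j := Iff.rfl

lemma mem_Wseq {u : V} {j : ℕ} :
    u ∈ Wseq D j ↔ u ∈ Dseq D j ∧ ∀ x ∈ Dseq D j, ¬ D u x := Iff.rfl

lemma exists_W_of_not_mem_Dseq {u : V} {j : ℕ} (h : u ∉ Dseq D j) :
    ∃ i < j, u ∈ Wseq D i := by
  induction j with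
  | zero => exact absurd (Set.mem_univ u) h
  | succ j ih =>
    by_cases hj : u ∈ Dseq D j
    · refine ⟨j, Nat.lt_succ_self j, ?_⟩
      by_contra hW
      exact h ⟨hj, hW⟩
    · obtain ⟨i, hi, hW⟩ := ih hj
      exact ⟨i, Nat.lt_succ_of_lt hi, hW⟩

lemma Dseq_subset_of_le {i j : ℕ} (h : i ≤ j) : Dseq D j ⊆ Dseq D i := by
  induction j with
  | zero => rw [Nat.le_zero.mp h]
  | succ j ih =>
    rcases Nat.lt_or_ge i (j+1) with h' | h'
    · exact fun u hu => ih (by omega) hu.1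
    · rw [Nat.le_antisymm h h']

lemma walk_length_le : ∀ j : ℕ, ∀ u : V, u ∈ Wseq D j → ∀ n z, walkN D n u z → n ≤ j := by
  intro j
  induction j using Nat.strong_induction_on with
  | _ j ih =>
    intro u hu n z hw
    cases n with
    | zero => exact Nat.zero_le j
    | succ n =>
      obtain ⟨x, hux, hw'⟩ := hw
      have hxnot : x ∉ Dseq D j := fun hx => hu.2 x hx hux
      obtain ⟨i, hij, hxW⟩ := exists_W_of_not_mem_Dseq hxnot
      have := ih i hij x hxW n z hw'
      omega

end

section
variable {V : Type*} {D : V → V → Prop} {V1 V2 : Set V}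

lemma mem_V2_of_not_V1 (hD : IsBipartiteTournament D V1 V2) {x : V} (h : x ∉ V1) : x ∈ V2 := by
  have : x ∈ V1 ∪ V2 := hD.union_eq ▸ Set.mem_univ x
  rcases this with h1 | h2
  · exact absurd h1 h
  · exact h2

lemma not_V1_of_mem_V2 (hD : IsBipartiteTournament D V1 V2) {x : V} (h : x ∈ V2) : x ∉ V1 := by
  intro h1
  have : x ∈ V1 ∩ V2 := ⟨h1, h⟩
  rw [hD.disj] at this
  exact this

lemma side_edge (hD : IsBipartiteTournament D V1 V2) {u v : V} (h : D u v) :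
    v ∈ V1 ↔ u ∉ V1 := by
  rcases hD.no_intra u v h with ⟨hu, hv⟩ | ⟨hu, hv⟩
  · constructor
    · intro h1 _; exact not_V1_of_mem_V2 hD hv h1
    · intro h1; exact absurd hu h1
  · have := not_V1_of_mem_V2 hD hu
    tauto

lemma side_walk (hD : IsBipartiteTournament D V1 V2) {m : ℕ} {u z : V}
    (h : walkN D m u z) : z ∈ V1 ↔ (u ∈ V1 ↔ Even m) := by
  induction m generalizing u with
  | zero =>
    have : u = z := h
    subst this
    simp
  | succ m ih =>
    obtain ⟨w, hw, h'⟩ := h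
    have h1 := ih h'
    have h2 := side_edge hD hw
    rw [Nat.even_add_one]
    tauto

/-- A vertex beaten by everything in `S` of the opposite side. -/
lemma beat_opp (hD : IsBipartiteTournament D V1 V2) {s x : V}
    (hns : ¬ D s x) (hside : x ∈ V1 ↔ s ∉ V1) : D x s := by
  by_cases h1 : x ∈ V1
  · have hs2 : s ∈ V2 := mem_V2_of_not_V1 hD (hside.mp h1)
    rcases hD.oriented x h1 s hs2 with ⟨hxs, _⟩ | ⟨hsx, _⟩
    · exact hxs
    · exact absurd hsx hns
  · have hs1 : s ∈ V1 := by tauto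
    have hx2 : x ∈ V2 := mem_V2_of_not_V1 hD h1
    rcases hD.oriented s hs1 x hx2 with ⟨hsx, _⟩ | ⟨hxs, _⟩
    · exact absurd hsx hns
    · exact hxs

end

/-- A bipartite tournament containing a directed cycle and with `ζ(D) ≥ 2`
has `cindex(D) = ζ(D)` and `cperiod(D) = 1`. -/
theorem cindex_eq_zeta_of_cycle {V : Type*} [Fintype V] (D : V → V → Prop)
    (V1 V2 : Set V) (hD : IsBipartiteTournament D V1 V2)
    (hcycle : ∃ (v : V) (n : ℕ), 0 < n ∧ walkN D n v v)
    (k : ℕ) (hk : IsSinkElimIndex D k) (hk2 : 2 ≤ k) :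
    (∀ q : ℕ, IsCindex D q → q = k) ∧
    (∀ q p : ℕ, IsCindex D q → IsCperiod D q p → p = 1) := by
  obtain ⟨k2, rfl⟩ : ∃ k2, k = k2 + 2 := ⟨k - 2, by omega⟩
  obtain ⟨v₀, n₀, hn₀, hv₀⟩ := hcycle
  have hlong : ∀ m, ∃ z, walkN D m v₀ z := exists_walkN_of_closed hv₀ hn₀
  -- the cycle vertex survives every elimination round
  have hv₀K : ∀ j, v₀ ∈ Dseq D j := by
    intro j
    by_contra h
    obtain ⟨i, _, hW⟩ := exists_W_of_not_mem_Dseq h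
    obtain ⟨z, hz⟩ := hlong (i + 1)
    have := walk_length_le i v₀ hW (i + 1) z hz
    omega
  -- W_k = ∅, so K := Dseq D (k2+2) has no sinks
  have hWk : Wseq D (k2 + 2) = ∅ := by
    rcases hk.1 with h | h
    · exfalso
      have hmem : v₀ ∈ Wseq D (k2 + 2) := by rw [h]; exact hv₀K _
      obtain ⟨z, hz⟩ := hlong (k2 + 3)
      have := walk_length_le _ v₀ hmem _ z hz
      omega
    · exact h
  have hKout : ∀ u ∈ Dseq D (k2 + 2), ∃ x ∈ Dseq D (k2 + 2), D u x := by
    intro u hu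
    by_contra h
    push_neg at h
    have : u ∈ Wseq D (k2 + 2) := ⟨hu, h⟩
    rw [hWk] at this
    exact this
  -- arbitrarily long walks inside K
  have hKwalk : ∀ u ∈ Dseq D (k2 + 2), ∀ n, ∃ x ∈ Dseq D (k2 + 2), walkN D n u x := by
    intro u hu n
    induction n with
    | zero => exact ⟨u, hu, rfl⟩
    | succ n ih =>
      obtain ⟨x, hx, hwx⟩ := ih
      obtain ⟨y, hy, hxy⟩ := hKout x hx
      exact ⟨y, hy, walkN_snoc hwx hxy⟩
  -- each vertex of W_{j+1} has an out-neighbour in W_j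
  have out_prev : ∀ j : ℕ, ∀ u, u ∈ Wseq D (j + 1) → ∃ y ∈ Wseq D j, D u y := by
    intro j u hu
    have huD : u ∈ Dseq D (j + 1) := hu.1
    have hej : ∃ y ∈ Dseq D j, D u y := by
      by_contra h
      push_neg at h
      exact huD.2 ⟨huD.1, h⟩
    obtain ⟨y, hy, huy⟩ := hej
    have hynot : y ∉ Dseq D (j + 1) := fun hyd => hu.2 y hyd huy
    have hyW : y ∈ Wseq D j := by
      by_contra hc
      exact hynot ⟨hy, hc⟩
    exact ⟨y, hyW, huy⟩
  -- chain walks from W_j down to W_0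
  have chain : ∀ j : ℕ, ∀ u, u ∈ Wseq D j → ∃ z, walkN D j u z := by
    intro j
    induction j with
    | zero => exact fun u _ => ⟨u, rfl⟩
    | succ j ih =>
      intro u hu
      obtain ⟨y, hyW, huy⟩ := out_prev j u hu
      obtain ⟨z, hz⟩ := ih y hyW
      exact ⟨z, y, huy, hz⟩
  -- all opposite-side vertices of Dseq j beat a sink of Dseq j
  have beat : ∀ j : ℕ, ∀ s, s ∈ Wseq D j → ∀ x ∈ Dseq D j, (x ∈ V1 ↔ s ∉ V1) → D x s :=
    fun j s hs x hx hside => beat_opp hD (hs.2 x hx) hside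
  -- fix w ∈ W_{k-1}, w' ∈ W_{k-2} an out-neighbour of w
  obtain ⟨w, hw⟩ : (Wseq D (k2 + 1)).Nonempty :=
    Set.nonempty_iff_ne_empty.2 (hk.2 (k2 + 1) (by omega)).2
  obtain ⟨w', hw'W, hww'⟩ := out_prev k2 w hw
  have hside_ww' : w' ∈ V1 ↔ w ∉ V1 := side_edge hD hww'
  -- characterization of cmGraph for m ≥ k
  have cm_big : ∀ m, k2 + 2 ≤ m → ∀ u v : V, (cmGraph D m).Adj u v ↔
      (u ≠ v ∧ u ∈ Dseq D (k2 + 2) ∧ v ∈ Dseq D (k2 + 2) ∧ (u ∈ V1 ↔ v ∈ V1)) := by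
    intro m hm u v
    constructor
    · rintro ⟨hne, z, hwu, hwv⟩
      have hmemK : ∀ x : V, walkN D m x z → x ∈ Dseq D (k2 + 2) := by
        intro x hx
        by_contra h
        obtain ⟨i, hi, hW⟩ := exists_W_of_not_mem_Dseq h
        have := walk_length_le i x hW m z hx
        omega
      have h1 := side_walk hD hwu
      have h2 := side_walk hD hwv
      exact ⟨hne, hmemK u hwu, hmemK v hwv, iff_of_iff_congr (h1.symm.trans h2)⟩
    · rintro ⟨hne, hu, hv, hsame⟩
      obtain ⟨n, rfl⟩ : ∃ n, m = n + 1 := ⟨m - 1, by omega⟩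
      obtain ⟨xu, hxu, hwxu⟩ := hKwalk u hu n
      obtain ⟨xv, hxv, hwxv⟩ := hKwalk v hv n
      have hsu := side_walk hD hwxu
      have hsv := side_walk hD hwxv
      have hxsame : xu ∈ V1 ↔ xv ∈ V1 :=
        hsu.trans ((iff_congr hsame Iff.rfl).trans hsv.symm)
      by_cases hcase : xu ∈ V1 ↔ w ∉ V1
      · have h1 : D xu w := beat (k2 + 1) w hw xu (Dseq_subset_of_le (by omega) hxu) hcase
        have h2 : D xv w := beat (k2 + 1) w hw xv (Dseq_subset_of_le (by omega) hxv) (hxsame.symm.trans hcase)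
        exact ⟨hne, w, walkN_snoc hwxu h1, walkN_snoc hwxv h2⟩
      · have hxw : xu ∈ V1 ↔ w ∈ V1 := iff_of_not_iff_not hcase
        have hw'w : ¬(w' ∈ V1) ↔ w ∈ V1 := not_iff_of_iff_not hside_ww'
        have h1 : D xu w' := beat k2 w' hw'W xu (Dseq_subset_of_le (by omega) hxu)
          (hxw.trans hw'w.symm)
        have h2 : D xv w' := beat k2 w' hw'W xv (Dseq_subset_of_le (by omega) hxv)
          (hxsame.symm.trans (hxw.trans hw'w.symm))
        exact ⟨hne, w', walkN_snoc hwxu h1, walkN_snoc hwxv h2⟩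
  have cm_eq : ∀ m, k2 + 2 ≤ m → cmGraph D m = cmGraph D (k2 + 2) := by
    intro m hm
    ext u v
    rw [cm_big m hm, cm_big (k2 + 2) le_rfl]
  -- cmGraph (k2+1) ≠ cmGraph (k2+2)
  obtain ⟨z, hzw'⟩ := chain k2 w' hw'W
  have hwz : walkN D (k2 + 1) w z := ⟨w', hww', hzw'⟩
  -- a vertex of K on the same side as w
  obtain ⟨u, hu, huside⟩ : ∃ u ∈ Dseq D (k2 + 2), (u ∈ V1 ↔ w ∈ V1) := by
    obtain ⟨y, hy, hvy⟩ := hKout v₀ (hv₀K (k2 + 2))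
    have := side_edge hD hvy
    by_cases h : v₀ ∈ V1 ↔ w ∈ V1
    · exact ⟨v₀, hv₀K (k2 + 2), h⟩
    · exact ⟨y, hy, this.trans (not_iff_of_not_iff h)⟩
  have huw' : D u w' := beat k2 w' hw'W u (Dseq_subset_of_le (by omega) hu)
    (huside.trans (not_iff_of_iff_not hside_ww').symm)
  have huz : walkN D (k2 + 1) u z := ⟨w', huw', hzw'⟩
  have hune : u ≠ w := by
    intro h
    exact (h ▸ hu).2 hw
  have adj1 : (cmGraph D (k2 + 1)).Adj u w := ⟨hune, z, huz, hwz⟩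
  have nadj2 : ¬ (cmGraph D (k2 + 2)).Adj u w := by
    rintro ⟨_, z', _, hwz'⟩
    have := walk_length_le (k2 + 1) w hw (k2 + 2) z' hwz'
    omega
  have cneq : cmGraph D (k2 + 1) ≠ cmGraph D (k2 + 2) := by
    intro h
    exact nadj2 (h ▸ adj1)
  -- assembly
  have hper : PeriodicFrom D (k2 + 2) :=
    ⟨1, one_pos, fun i => by
      rw [cm_eq (k2 + 2 + i) (by omega), cm_eq (k2 + 2 + 1 + i) (by omega)]⟩
  have hnot : ∀ j, 0 < j → j < k2 + 2 → ¬ PeriodicFrom D j := by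
    rintro j hj0 hjk ⟨r, hr, h⟩
    have h1 := h (k2 + 1 - j)
    rw [show j + (k2 + 1 - j) = k2 + 1 by omega] at h1
    rw [show j + r + (k2 + 1 - j) = k2 + 1 + r by omega] at h1
    exact cneq (h1.trans (cm_eq (k2 + 1 + r) (by omega)))
  have key : ∀ q : ℕ, IsCindex D q → q = k2 + 2 := by
    rintro q ⟨hq0, hqper, hqmin⟩
    have hqle : q ≤ k2 + 2 := hqmin (k2 + 2) (by omega) hper
    by_contra hne'
    exact hnot q hq0 (by omega) hqper
  refine ⟨key, ?_⟩
  intro q p hq hp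
  have hqk := key q hq
  subst hqk
  obtain ⟨hp0, _, hpmin⟩ := hp
  have h1 : cmGraph D (k2 + 2) = cmGraph D (k2 + 2 + 1) := (cm_eq (k2 + 2 + 1) (by omega)).symm
  have := hpmin 1 one_pos h1
  omega
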